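/- For any natural numbers N ≥ 1, l, m, d, the residue at x = 0 of (1+x)^{N-1+l} / ((1+x)^N - 1)^{d+1} · x^m equals (1/N) · Σ_{p=0}^{m} (-1)^{m-p} · binom(m, p) · binom((l+p)/N, d), where binom(α, d) = α(α-1)⋯(α-d+1)/d! denotes the generalized binomial coefficient for rational α. -/

import Mathlib

noncomputable def xL : LaurentSeries ℂ := HahnSeries.single 1 1

/-- The generalized binomial coefficient `α(α-1)⋯(α-d+1)/d!` for rational `α`. -/
noncomputable def genChoose (α : ℚ) (d : ℕ) : ℚ :=
  (∏ i ∈ Finset.range d, (α - i)) / d.factorial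

open PowerSeries

namespace Stmt3Aux

noncomputable def h (N : ℕ) : PowerSeries ℂ := PowerSeries.mk fun i => (N.choose (i+1) : ℂ)

noncomputable def u (N : ℕ) : PowerSeries ℂ := (h N)⁻¹

lemma coeff_onepX_pow (n k : ℕ) : (coeff k) ((1 + X)^n) = (n.choose k : ℂ) := by
  have h1 : ((1 + X : ℂ⟦X⟧))^n = (((1 + Polynomial.X : Polynomial ℂ)^n : Polynomial ℂ) : ℂ⟦X⟧) := by
    rw [Polynomial.coe_pow, Polynomial.coe_add, Polynomial.coe_one, Polynomial.coe_X]
  rw [h1, Polynomial.coeff_coe, Polynomial.coeff_one_add_X_pow]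

lemma Xh (N : ℕ) : X * h N = (1 + X)^N - 1 := by
  ext k
  rcases k with _ | k
  · simp [coeff_onepX_pow, h]
  · rw [coeff_succ_X_mul, map_sub, coeff_onepX_pow]
    simp [h]

lemma constCoeff_h (N : ℕ) : constantCoeff (h N) = N := by
  rw [show h N = PowerSeries.mk fun i => (N.choose (i+1) : ℂ) from rfl,
    ← coeff_zero_eq_constantCoeff]
  simp

variable {N : ℕ} (hN : 1 ≤ N)

include hN

lemma Nne : (N : ℂ) ≠ 0 := by exact_mod_cast Nat.one_le_iff_ne_zero.mp hN

lemma hu : h N * u N = 1 := by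
  apply PowerSeries.mul_inv_cancel
  rw [constCoeff_h]
  exact Nne hN

lemma h_mul_u_pow (e : ℕ) : h N * u N ^ (e+1) = u N ^ e := by
  rw [pow_succ', ← mul_assoc, hu hN, one_mul]

lemma relP (b e : ℕ) :
    coeff (e+1) ((1+X)^(b+N) * u N ^ (e+2)) =
      coeff (e+1) ((1+X)^b * u N ^ (e+2)) + coeff e ((1+X)^b * u N ^ (e+1)) := by
  have h1 : ((1:ℂ⟦X⟧)+X)^N = 1 + X * h N := by rw [Xh]; ring
  have h2 := h_mul_u_pow hN (e+1)
  have key : ((1:ℂ⟦X⟧)+X)^(b+N) * u N ^ (e+2) =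
      (1+X)^b * u N ^ (e+2) + X * ((1+X)^b * u N ^ (e+1)) := by
    calc ((1:ℂ⟦X⟧)+X)^(b+N) * u N ^ (e+2)
        = (1+X)^b * u N ^ (e+2) + X * ((1+X)^b * (h N * u N ^ (e+2))) := by
          rw [pow_add, h1]; ring
      _ = _ := by rw [h2]
  rw [key, map_add, coeff_succ_X_mul]

omit hN in
lemma coeff_natCast_mul (n k : ℕ) (f : ℂ⟦X⟧) :
    coeff k (((n:ℂ⟦X⟧)+1) * f) = ((n:ℂ)+1) * coeff k f := by
  have h1 : ((n:ℂ⟦X⟧)+1) = C ((n:ℂ)+1) := by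
    rw [map_add, map_natCast, map_one]
  rw [h1, coeff_C_mul]

lemma relD (b d : ℕ) :
    ((b:ℂ)+1) * coeff d ((1+X)^b * u N ^ (d+1)) =
      ((d:ℂ)+1) * N * coeff (d+1) ((1+X)^(b+N) * u N ^ (d+2)) := by
  obtain ⟨M, rfl⟩ : ∃ M, N = M + 1 := ⟨N - 1, by omega⟩
  have hDP : d⁄dX ℂ ((1:ℂ⟦X⟧) + X) = 1 := by simp
  have hDppow : ∀ n : ℕ, d⁄dX ℂ (((1:ℂ⟦X⟧)+X)^(n+1)) = ((n:ℂ⟦X⟧)+1) * (1+X)^n := by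
    intro n
    rw [Derivation.leibniz_pow, hDP]
    simp only [Nat.add_sub_cancel, smul_eq_mul, mul_one, nsmul_eq_mul, Nat.cast_add,
      Nat.cast_one]
  have hXh' : X * d⁄dX ℂ (h (M+1)) = ((M:ℂ⟦X⟧)+1) * (1+X)^M - h (M+1) := by
    have hc := congrArg (d⁄dX ℂ) (Xh (M+1))
    rw [Derivation.leibniz, map_sub, hDppow M] at hc
    simp only [derivative_X, Derivation.map_one_eq_zero, smul_eq_mul, mul_one, one_smul,
      sub_zero] at hc
    linear_combination hc
  have hDu : d⁄dX ℂ (u (M+1)) = -(u (M+1))^2 * d⁄dX ℂ (h (M+1)) := derivative_inv' _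
  have hupow : d⁄dX ℂ (u (M+1) ^ (d+1)) = ((d:ℂ⟦X⟧)+1) * (u (M+1)^d * d⁄dX ℂ (u (M+1))) := by
    rw [Derivation.leibniz_pow]
    simp only [Nat.add_sub_cancel, smul_eq_mul, nsmul_eq_mul, Nat.cast_add, Nat.cast_one]
  have h2 : h (M+1) * u (M+1) ^ (d+2) = u (M+1) ^ (d+1) := h_mul_u_pow hN (d+1)
  have key : X * d⁄dX ℂ ((1+X)^(b+1) * u (M+1)^(d+1))
      = ((b:ℂ⟦X⟧)+1) * (X * ((1+X)^b * u (M+1)^(d+1)))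
        + ((d:ℂ⟦X⟧)+1) * ((1+X)^(b+1) * u (M+1)^(d+1))
        - ((d:ℂ⟦X⟧)+1) * (((M:ℂ⟦X⟧)+1) * ((1+X)^(b+1+M) * u (M+1)^(d+2))) := by
    rw [Derivation.leibniz, hupow, hDu, hDppow b]
    simp only [smul_eq_mul]
    linear_combination (-(((d:ℂ⟦X⟧)+1) * (1+X)^(b+1) * u (M+1)^(d+2))) * hXh'
      + (((d:ℂ⟦X⟧)+1) * (1+X)^(b+1)) * h2
  have hc := congrArg (coeff (d+1)) key
  rw [coeff_succ_X_mul, coeff_derivative, map_sub, map_add, coeff_natCast_mul,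
    coeff_natCast_mul, coeff_natCast_mul, coeff_natCast_mul, coeff_succ_X_mul] at hc
  rw [show b + (M+1) = b+1+M from by omega]
  push_cast
  linear_combination -hc


omit hN in
lemma genChoose_succ (α : ℚ) (e : ℕ) :
    genChoose α (e+1) = genChoose α e * (α - e) / (e+1) := by
  unfold genChoose
  rw [Finset.prod_range_succ, Nat.factorial_succ, div_mul_eq_mul_div, div_div]
  congr 1
  push_cast
  ring

lemma main (d : ℕ) : ∀ a : ℕ,
    coeff d ((1+X)^(a+N-1) * u N ^ (d+1)) =
      (1/(N:ℂ)) * ((genChoose ((a:ℚ)/N) d : ℚ) : ℂ) := by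
  induction d with
  | zero =>
    intro a
    have : genChoose ((a:ℚ)/N) 0 = 1 := by simp [genChoose]
    rw [this, coeff_zero_eq_constantCoeff, map_mul, map_pow, map_pow]
    rw [show u N = (h N)⁻¹ from rfl, PowerSeries.constantCoeff_inv, constCoeff_h]
    simp
  | succ d ih =>
    intro a
    set b := a + N - 1 with hb
    have hb1 : b + 1 = a + N := by omega
    have hP := relP hN b d
    have hD := relD hN b d
    set T := coeff (d+1) ((1+X)^b * u N ^ (d+2)) with hT
    set R := coeff d ((1+X)^b * u N ^ (d+1)) with hR
    rw [hP] at hD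
    -- hD : (b+1) * R = (d+1) * N * (T + R)
    have hbc : (b:ℂ) + 1 = (a:ℂ) + N := by exact_mod_cast congrArg (Nat.cast : ℕ → ℂ) hb1
    have hNne : (N:ℂ) ≠ 0 := Nne hN
    have hdne : ((d:ℂ)+1) ≠ 0 := by
      have h0 : ((d+1:ℕ):ℂ) ≠ 0 := Nat.cast_ne_zero.mpr (Nat.succ_ne_zero d)
      push_cast at h0
      exact h0
    have hRv := ih a
    rw [← hR] at hRv
    have hgs : ((genChoose ((a:ℚ)/N) (d+1) : ℚ) : ℂ) =
        ((genChoose ((a:ℚ)/N) d : ℚ) : ℂ) * ((a:ℂ)/N - d) / (d+1) := by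
      rw [genChoose_succ]
      push_cast
      ring
    show T = (1/(N:ℂ)) * ((genChoose ((a:ℚ)/N) (d+1) : ℚ) : ℂ)
    rw [hgs]
    have hgd : ((genChoose ((a:ℚ)/N) d : ℚ) : ℂ) = N * R := by
      rw [hRv]; field_simp
    have hTval : T = ((a:ℂ) - d*N) * R / ((d+1)*N) := by
      rw [eq_div_iff (mul_ne_zero hdne hNne)]
      linear_combination -hD + R * hbc
    rw [hgd, hTval]
    field_simp

lemma sum_lemma (l m d : ℕ) :
    coeff d ((1+X)^(N-1+l) * X^m * u N ^ (d+1)) =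
      (1 / N : ℂ) * ∑ p ∈ Finset.range (m + 1),
          (-1 : ℂ) ^ (m - p) * (m.choose p) *
            ((genChoose (((l : ℚ) + p) / N) d : ℚ) : ℂ) := by
  have hXm : (X : ℂ⟦X⟧)^m = ∑ p ∈ Finset.range (m+1),
      (-1:ℂ⟦X⟧)^(p+m) * (1+X)^p * 1^(m-p) * ((m.choose p : ℕ) : ℂ⟦X⟧) := by
    rw [show (X:ℂ⟦X⟧) = (1+X) - 1 from by ring, sub_pow]
    simp
  rw [hXm, Finset.mul_sum, Finset.sum_mul, map_sum, Finset.mul_sum]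
  apply Finset.sum_congr rfl
  intro p hp
  have hp' : p ≤ m := by
    rw [Finset.mem_range] at hp; omega
  have e1 : ((1:ℂ⟦X⟧)+X)^(N-1+l) * ((-1:ℂ⟦X⟧)^(p+m) * (1+X)^p * 1^(m-p) * (m.choose p : ℂ⟦X⟧))
        * u N ^ (d+1)
      = C ((-1:ℂ)^(p+m) * (m.choose p : ℂ)) * ((1+X)^((l+p)+N-1) * u N ^ (d+1)) := by
    have hcomb : ((1:ℂ⟦X⟧)+X)^(N-1+l) * (1+X)^p = (1+X)^((l+p)+N-1) := by
      rw [← pow_add, show N-1+l+p = (l+p)+N-1 from by omega]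
    rw [map_mul, map_pow, map_neg, map_one, map_natCast]
    linear_combination (((-1:ℂ⟦X⟧)^(p+m) * ((m.choose p : ℕ) : ℂ⟦X⟧)) * u N ^ (d+1)) * hcomb
  rw [e1, coeff_C_mul, main hN d (l+p)]
  have e2 : (-1:ℂ)^(p+m) = (-1:ℂ)^(m-p) := by
    rw [show p+m = (m-p) + 2*p from by omega, pow_add, pow_mul]
    norm_num
  have e3 : (((l+p:ℕ):ℚ)/N) = ((l:ℚ)+p)/N := by push_cast; ring
  rw [e2, e3]
  ring

end Stmt3Aux

theorem stmt3 (N l m d : ℕ) (hN : 1 ≤ N) :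
    ((((1 + xL) ^ (N - 1 + l)) / ((1 + xL) ^ N - 1) ^ (d + 1)) * xL ^ m).coeff (-1)
      = (1 / N : ℂ) * ∑ p ∈ Finset.range (m + 1),
          (-1 : ℂ) ^ (m - p) * (m.choose p) *
            ((genChoose (((l : ℚ) + p) / N) d : ℚ) : ℂ) := by
  classical
  set F := HahnSeries.ofPowerSeries ℤ ℂ with hF
  have hxL : xL = F X := by rw [hF, HahnSeries.ofPowerSeries_X]; rfl
  have h1xL : (1 + xL : LaurentSeries ℂ) = F (1 + X) := by rw [map_add, map_one, hxL]
  set φ : ℂ⟦X⟧ := (1+X)^(N-1+l) * X^m * Stmt3Aux.u N ^ (d+1) with hφ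
  have hinj : Function.Injective F := HahnSeries.ofPowerSeries_injective
  have hhne : Stmt3Aux.h N ≠ 0 := by
    intro h0
    have := Stmt3Aux.constCoeff_h N
    rw [h0, map_zero] at this
    exact (Stmt3Aux.Nne hN) this.symm
  have hy : ((1 + xL)^N - 1 : LaurentSeries ℂ) = F (X * Stmt3Aux.h N) := by
    rw [Stmt3Aux.Xh, map_sub, map_pow, map_one, h1xL]
  have hBne : (((1 + xL)^N - 1 : LaurentSeries ℂ))^(d+1) ≠ 0 := by
    rw [hy]
    apply pow_ne_zero
    intro h0
    have : (X * Stmt3Aux.h N : ℂ⟦X⟧) = 0 := hinj (by rw [h0, map_zero])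
    exact mul_ne_zero PowerSeries.X_ne_zero hhne this
  have key : (((1 + xL) ^ (N - 1 + l)) / ((1 + xL) ^ N - 1) ^ (d + 1)) * xL ^ m
      = HahnSeries.single (-(d+1) : ℤ) 1 * F φ := by
    rw [div_mul_eq_mul_div, div_eq_iff hBne, hy, h1xL, hxL]
    have hps : φ * (X * Stmt3Aux.h N)^(d+1) = X^(d+1) * ((1+X)^(N-1+l) * X^m) := by
      have h2 : Stmt3Aux.h N ^ (d+1) * Stmt3Aux.u N ^ (d+1) = 1 := by
        rw [← mul_pow, Stmt3Aux.hu hN, one_pow]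
      calc φ * (X * Stmt3Aux.h N)^(d+1)
          = X^(d+1) * ((1+X)^(N-1+l) * X^m) * (Stmt3Aux.h N ^ (d+1) * Stmt3Aux.u N ^ (d+1)) := by
            rw [hφ, mul_pow]; ring
        _ = _ := by rw [h2, mul_one]
    have hXpow : F (X^(d+1)) = HahnSeries.single ((d+1 : ℤ)) 1 := by
      rw [map_pow, hF, HahnSeries.ofPowerSeries_X, HahnSeries.single_pow, one_pow, nsmul_eq_mul,
        mul_one]
      norm_cast
    simp only [← map_pow, mul_assoc, ← map_mul]
    rw [hps, map_mul F (X^(d+1)), hXpow, ← mul_assoc, HahnSeries.single_mul_single, one_mul,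
      show (-(d+1 : ℤ)) + (d+1 : ℤ) = 0 from by ring, HahnSeries.single_zero_one, one_mul]
  rw [key]
  have hc1 : (HahnSeries.single (-(d+1) : ℤ) 1 * F φ).coeff (-1) = (F φ).coeff (d : ℤ) := by
    have h3 := HahnSeries.coeff_single_mul_add (r := (1:ℂ)) (x := F φ) (a := (d:ℤ))
      (b := (-(d+1) : ℤ))
    rw [show (d:ℤ) + (-(d+1) : ℤ) = -1 from by ring, one_mul] at h3
    exact h3
  rw [hc1]
  have hc2 : (F φ).coeff (d : ℤ) = PowerSeries.coeff d φ :=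
    LaurentSeries.coeff_coe_powerSeries φ d
  rw [hc2, hφ, Stmt3Aux.sum_lemma hN]
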